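/- Let m ∈ ℕ, let p, q ∈ [1, ∞] be conjugate exponents (1/p + 1/q = 1, with the convention 1/∞ = 0), let τ > 0 and û ∈ ℝᵐ. Let Π be the (unique) point of the closed unit ℓ_q-ball B_q := {y ∈ ℝᵐ : ‖y‖_q ≤ 1} nearest in Euclidean norm to τ·û. Then the unique global minimizer of y ↦ τ⁻¹‖y‖_p + (1/2)‖y − û‖₂² equals û − τ⁻¹·Π; that is, Prox_{τ⁻¹‖·‖_p}(û) = û − τ⁻¹·Π_{B_q}(τ·û). -/

import Mathlib

open scoped ENNReal

noncomputable def lpNorm (p : ℝ≥0∞) [Fact (1 ≤ p)] {m : ℕ} (y : Fin m → ℝ) : ℝ :=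
  ‖(WithLp.equiv p (Fin m → ℝ)).symm y‖

namespace Stmt16Aux

open Finset
open scoped NNReal InnerProductSpace

variable {m : ℕ}

lemma lpNorm_nonneg (p : ℝ≥0∞) [Fact (1 ≤ p)] (y : Fin m → ℝ) : 0 ≤ lpNorm p y :=
  norm_nonneg _

lemma lpNorm_eq_sum (p : ℝ≥0∞) [Fact (1 ≤ p)] (hp : p ≠ ∞) (y : Fin m → ℝ) :
    lpNorm p y = (∑ i, |y i| ^ p.toReal) ^ (1 / p.toReal) := by
  have h1 : (1 : ℝ≥0∞) ≤ p := Fact.out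
  have hp0 : 0 < p.toReal := ENNReal.toReal_pos (zero_lt_one.trans_le h1).ne' hp
  rw [lpNorm, PiLp.norm_eq_sum hp0]
  simp [Real.norm_eq_abs]

lemma lpNorm_one (p : ℝ≥0∞) [Fact (1 ≤ p)] (hp : p = 1) (y : Fin m → ℝ) :
    lpNorm p y = ∑ i, |y i| := by
  rw [lpNorm_eq_sum p (by simp [hp]) y, hp]
  simp

lemma lpNorm_top (p : ℝ≥0∞) [Fact (1 ≤ p)] (hp : p = ∞) (y : Fin m → ℝ) :
    lpNorm p y = ⨆ i, |y i| := by
  subst hp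
  rw [lpNorm, PiLp.norm_eq_ciSup]
  simp [Real.norm_eq_abs]

lemma lpNorm_zero (p : ℝ≥0∞) [Fact (1 ≤ p)] :
    lpNorm p (0 : Fin m → ℝ) = 0 := by
  rw [lpNorm, WithLp.equiv_symm_apply, WithLp.toLp_zero]
  exact norm_zero

/-- sign helper -/
noncomputable def sgn (t : ℝ) : ℝ := if t < 0 then -1 else 1

lemma abs_sgn (t : ℝ) : |sgn t| = 1 := by
  unfold sgn; split <;> simp

lemma sgn_mul_self (t : ℝ) : sgn t * t = |t| := by
  unfold sgn
  rcases lt_trichotomy t 0 with h | h | h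
  · rw [if_pos h, abs_of_neg h]; ring
  · simp [h]
  · rw [if_neg (not_lt.mpr h.le), abs_of_pos h]; ring

section Conj

variable {p q : ℝ≥0∞} [Fact (1 ≤ p)] [Fact (1 ≤ q)]

lemma conj_cases (hpq : 1 / p + 1 / q = 1) :
    (p = 1 ∧ q = ∞) ∨ (p = ∞ ∧ q = 1) ∨
      (p ≠ ∞ ∧ q ≠ ∞ ∧ p.toReal.HolderConjugate q.toReal) := by
  have hp1 : (1 : ℝ≥0∞) ≤ p := Fact.out
  have hq1 : (1 : ℝ≥0∞) ≤ q := Fact.out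
  rw [one_div, one_div] at hpq
  by_cases hp : p = 1
  · left
    refine ⟨hp, ?_⟩
    rw [hp] at hpq
    simp only [inv_one] at hpq
    have : q⁻¹ = 0 :=
      (ENNReal.add_right_inj (by simp : (1:ℝ≥0∞) ≠ ∞)).mp (by rw [hpq, add_zero])
    simpa [ENNReal.inv_eq_zero] using this
  · by_cases hq : q = 1
    · right; left
      refine ⟨?_, hq⟩
      rw [hq] at hpq
      simp only [inv_one] at hpq
      have hpq' : p⁻¹ + 1 = 1 + 0 := by rw [hpq, add_zero]
      rw [add_comm p⁻¹ 1] at hpq'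
      have : p⁻¹ = 0 := (ENNReal.add_right_inj (by simp : (1:ℝ≥0∞) ≠ ∞)).mp hpq'
      simpa [ENNReal.inv_eq_zero] using this
    · right; right
      have hplt : 1 < p := lt_of_le_of_ne hp1 (Ne.symm hp)
      have hqlt : 1 < q := lt_of_le_of_ne hq1 (Ne.symm hq)
      have hptop : p ≠ ∞ := by
        intro hp'
        rw [hp', ENNReal.inv_top, zero_add, ENNReal.inv_eq_one] at hpq
        exact hq hpq
      have hqtop : q ≠ ∞ := by
        intro hq'
        rw [hq', ENNReal.inv_top, add_zero, ENNReal.inv_eq_one] at hpq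
        exact hp hpq
      refine ⟨hptop, hqtop, Real.holderConjugate_iff.mpr ⟨?_, ?_⟩⟩
      · rw [← ENNReal.toReal_one]
        exact ENNReal.toReal_lt_toReal (by simp) hptop |>.mpr hplt
      · have hpi : p⁻¹ ≠ ∞ := by simp [(zero_lt_one.trans_le hp1).ne']
        have hqi : q⁻¹ ≠ ∞ := by simp [(zero_lt_one.trans_le hq1).ne']
        have := congrArg ENNReal.toReal hpq
        rw [ENNReal.toReal_add hpi hqi, ENNReal.toReal_inv, ENNReal.toReal_inv,
          ENNReal.toReal_one] at this
        exact this

end Conj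

section Holder

variable {p q : ℝ≥0∞} [Fact (1 ≤ p)] [Fact (1 ≤ q)]

lemma abs_le_lpNorm_top (hq : q = ∞) (w : Fin m → ℝ) (i : Fin m) :
    |w i| ≤ lpNorm q w := by
  rw [lpNorm_top q hq]
  exact le_ciSup (f := fun j => |w j|) ((Set.finite_range _).bddAbove) i

lemma holder (hpq : 1 / p + 1 / q = 1) (w x : Fin m → ℝ) :
    ∑ i, w i * x i ≤ lpNorm q w * lpNorm p x := by
  rcases conj_cases hpq with ⟨hp, hq⟩ | ⟨hp, hq⟩ | ⟨hp, hq, hr⟩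
  · -- p = 1, q = ∞
    rw [lpNorm_one p hp, mul_comm]
    calc ∑ i, w i * x i ≤ ∑ i, |x i| * lpNorm q w := by
          refine Finset.sum_le_sum fun i _ => ?_
          calc w i * x i ≤ |w i * x i| := le_abs_self _
            _ = |x i| * |w i| := by rw [abs_mul, mul_comm]
            _ ≤ |x i| * lpNorm q w :=
                mul_le_mul_of_nonneg_left (abs_le_lpNorm_top hq w i) (abs_nonneg _)
      _ = (∑ i, |x i|) * lpNorm q w := by rw [← Finset.sum_mul]
  · -- p = ∞, q = 1
    rw [lpNorm_one q hq]
    calc ∑ i, w i * x i ≤ ∑ i, |w i| * lpNorm p x := by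
          refine Finset.sum_le_sum fun i _ => ?_
          calc w i * x i ≤ |w i * x i| := le_abs_self _
            _ = |w i| * |x i| := abs_mul _ _
            _ ≤ |w i| * lpNorm p x :=
                mul_le_mul_of_nonneg_left (abs_le_lpNorm_top hp x i) (abs_nonneg _)
      _ = (∑ i, |w i|) * lpNorm p x := by rw [← Finset.sum_mul]
  · rw [lpNorm_eq_sum p hp, lpNorm_eq_sum q hq]
    exact Real.inner_le_Lp_mul_Lq Finset.univ w x hr.symm

lemma exists_dual (hpq : 1 / p + 1 / q = 1) (x : Fin m → ℝ) :
    ∃ w : Fin m → ℝ, lpNorm q w ≤ 1 ∧ ∑ i, w i * x i = lpNorm p x := by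
  by_cases hx : x = 0
  · exact ⟨0, by simp [hx, lpNorm_zero], by simp [hx, lpNorm_zero]⟩
  rcases conj_cases hpq with ⟨hp, hq⟩ | ⟨hp, hq⟩ | ⟨hp, hq, hr⟩
  · -- p = 1 : take signs
    refine ⟨fun i => sgn (x i), ?_, ?_⟩
    · rw [lpNorm_top q hq]
      exact Real.iSup_le (fun i => by rw [abs_sgn]) zero_le_one
    · rw [lpNorm_one p hp]
      exact Finset.sum_congr rfl fun i _ => sgn_mul_self _
  · -- p = ∞ : take a signed basis vector at the max coordinate
    obtain ⟨j, -, hj⟩ := Finset.exists_max_image Finset.univ (fun i => |x i|)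
      ⟨(Function.ne_iff.mp hx).choose, Finset.mem_univ _⟩
    refine ⟨fun i => if i = j then sgn (x j) else 0, ?_, ?_⟩
    · rw [lpNorm_one q hq]
      have : ∀ i, |if i = j then sgn (x j) else 0| = if i = j then 1 else 0 := by
        intro i; split <;> simp [abs_sgn]
      simp only [this, Finset.sum_ite_eq' Finset.univ j, Finset.mem_univ, if_true]
      exact le_refl 1
    · rw [lpNorm_top p hp]
      have hsum : ∑ i, (if i = j then sgn (x j) else 0) * x i = |x j| := by
        rw [Finset.sum_eq_single j]
        · rw [if_pos rfl, sgn_mul_self]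
        · intro i _ hij; rw [if_neg hij, zero_mul]
        · intro hj'; exact absurd (Finset.mem_univ j) hj'
      rw [hsum]
      refine le_antisymm ?_ ?_
      · exact le_ciSup (f := fun i => |x i|) ((Set.finite_range _).bddAbove) j
      · exact Real.iSup_le (fun i => hj i (Finset.mem_univ i)) (abs_nonneg _)
  · -- 1 < p < ∞
    obtain ⟨⟨g, hg, H⟩, -⟩ := NNReal.isGreatest_Lp Finset.univ (fun i => ‖x i‖₊) hr
    refine ⟨fun i => sgn (x i) * g i, ?_, ?_⟩
    · rw [lpNorm_eq_sum q hq]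
      have habs : ∀ i : Fin m, |sgn (x i) * (g i : ℝ)| = (g i : ℝ) := by
        intro i; rw [abs_mul, abs_sgn, one_mul, abs_of_nonneg (g i).coe_nonneg]
      show (∑ i : Fin m, |sgn (x i) * (g i : ℝ)| ^ q.toReal) ^ (1 / q.toReal) ≤ 1
      have hg' : ((∑ i : Fin m, g i ^ q.toReal : ℝ≥0) : ℝ) ≤ 1 := by
        have hg2 : ∑ i : Fin m, g i ^ q.toReal ≤ 1 := hg
        exact_mod_cast hg2
      have hsum : ∑ i : Fin m, |sgn (x i) * (g i : ℝ)| ^ q.toReal ≤ 1 := by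
        refine le_trans (le_of_eq ?_) hg'
        rw [NNReal.coe_sum]
        exact Finset.sum_congr rfl fun i _ => by rw [habs i, NNReal.coe_rpow]
      have h0 : (0:ℝ) ≤ ∑ i : Fin m, |sgn (x i) * (g i : ℝ)| ^ q.toReal :=
        Finset.sum_nonneg fun i _ => Real.rpow_nonneg (abs_nonneg _) _
      have hqr : (0:ℝ) ≤ 1 / q.toReal := by positivity
      exact Real.rpow_le_one h0 hsum hqr
    · show ∑ i : Fin m, sgn (x i) * (g i : ℝ) * x i = lpNorm p x
      have step1 : ∑ i : Fin m, sgn (x i) * (g i : ℝ) * x i = ((∑ i : Fin m, ‖x i‖₊ * g i : ℝ≥0) : ℝ) := by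
        rw [NNReal.coe_sum]
        refine Finset.sum_congr rfl fun i _ => ?_
        rw [NNReal.coe_mul, coe_nnnorm, Real.norm_eq_abs, ← sgn_mul_self (x i)]
        ring
      rw [step1, show (∑ i : Fin m, ‖x i‖₊ * g i : ℝ≥0) = (∑ i : Fin m, ‖x i‖₊ ^ p.toReal) ^ (1 / p.toReal) from H,
        lpNorm_eq_sum p hp]
      rw [NNReal.coe_rpow, NNReal.coe_sum]
      have hc : ∀ i : Fin m, ((‖x i‖₊ ^ p.toReal : ℝ≥0) : ℝ) = |x i| ^ p.toReal := fun i => by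
        rw [NNReal.coe_rpow, coe_nnnorm, Real.norm_eq_abs]
      rw [Finset.sum_congr rfl fun i _ => hc i]

end Holder

lemma convex_lpBall (q : ℝ≥0∞) [Fact (1 ≤ q)] :
    Convex ℝ {y : EuclideanSpace ℝ (Fin m) | lpNorm q y ≤ 1} := by
  intro x hx y hy a b ha hb hab
  simp only [Set.mem_setOf_eq] at hx hy ⊢
  unfold lpNorm at *
  calc ‖(WithLp.equiv q (Fin m → ℝ)).symm (a • x + b • y)‖
      = ‖a • (WithLp.equiv q (Fin m → ℝ)).symm x + b • (WithLp.equiv q (Fin m → ℝ)).symm y‖ := rfl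
    _ ≤ a * ‖(WithLp.equiv q (Fin m → ℝ)).symm x‖ + b * ‖(WithLp.equiv q (Fin m → ℝ)).symm y‖ := by
        refine (norm_add_le _ _).trans ?_
        rw [norm_smul, norm_smul, Real.norm_eq_abs, Real.norm_eq_abs,
          abs_of_nonneg ha, abs_of_nonneg hb]
    _ ≤ a * 1 + b * 1 := by
        exact add_le_add (mul_le_mul_of_nonneg_left hx ha) (mul_le_mul_of_nonneg_left hy hb)
    _ = 1 := by rw [mul_one, mul_one, hab]

lemma inner_eq_sum (w x : EuclideanSpace ℝ (Fin m)) :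
    ⟪w, x⟫_ℝ = ∑ i, w i * x i := by
  simp [PiLp.inner_apply, RCLike.inner_apply, conj_trivial, mul_comm]

end Stmt16Aux

open Stmt16Aux
open scoped InnerProductSpace

set_option maxHeartbeats 1000000 in
/-- Moreau decomposition: `Prox_{τ⁻¹‖·‖_p}(û) = û − τ⁻¹·Π_{B_q}(τû)`, where `q` is the
conjugate exponent of `p` and `Π_{B_q}` is the Euclidean projection onto the unit
`ℓ_q`-ball. -/
theorem stmt_16 {m : ℕ} (p q : ℝ≥0∞) [Fact (1 ≤ p)] [Fact (1 ≤ q)]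
    (hpq : 1 / p + 1 / q = 1) (τ : ℝ) (hτ : 0 < τ)
    (uhat : EuclideanSpace ℝ (Fin m))
    (Pi : EuclideanSpace ℝ (Fin m))
    (hPi1 : lpNorm q Pi ≤ 1)
    (hPi2 : ∀ y : EuclideanSpace ℝ (Fin m), lpNorm q y ≤ 1 →
      ‖τ • uhat - Pi‖ ≤ ‖τ • uhat - y‖)
    (h : EuclideanSpace ℝ (Fin m) → ℝ)
    (hh : ∀ y, h y = τ⁻¹ * lpNorm p y + 1 / 2 * ‖y - uhat‖ ^ 2) :
    (∀ y, h (uhat - τ⁻¹ • Pi) ≤ h y) ∧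
      ∀ z : EuclideanSpace ℝ (Fin m), (∀ y, h z ≤ h y) → z = uhat - τ⁻¹ • Pi := by
  set z : EuclideanSpace ℝ (Fin m) := uhat - τ⁻¹ • Pi with hz
  have hτz : τ • uhat - Pi = τ • z := by
    rw [hz, smul_sub, smul_smul, mul_inv_cancel₀ hτ.ne', one_smul]
  have hconv := convex_lpBall (m := m) q
  haveI : Nonempty {y : EuclideanSpace ℝ (Fin m) | lpNorm q y ≤ 1} := ⟨⟨Pi, hPi1⟩⟩
  have hinf : ‖τ • uhat - Pi‖ =
      ⨅ w : {y : EuclideanSpace ℝ (Fin m) | lpNorm q y ≤ 1}, ‖τ • uhat - w‖ := by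
    refine le_antisymm (le_ciInf fun w => hPi2 w.1 w.2) ?_
    refine ciInf_le ⟨0, ?_⟩ (⟨Pi, hPi1⟩ : {y : EuclideanSpace ℝ (Fin m) | lpNorm q y ≤ 1})
    rintro r ⟨w, rfl⟩
    exact norm_nonneg _
  have hvar : ∀ w : EuclideanSpace ℝ (Fin m), lpNorm q w ≤ 1 →
      ⟪τ • z, w - Pi⟫_ℝ ≤ 0 := by
    intro w hw
    rw [← hτz]
    exact (norm_eq_iInf_iff_real_inner_le_zero hconv hPi1).mp hinf w hw
  have hol : ∀ y : EuclideanSpace ℝ (Fin m), ⟪Pi, y⟫_ℝ ≤ lpNorm p y := by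
    intro y
    rw [inner_eq_sum]
    exact (holder hpq Pi y).trans (mul_le_of_le_one_left (lpNorm_nonneg p y) hPi1)
  have key2 : ⟪Pi, z⟫_ℝ = lpNorm p z := by
    refine le_antisymm (hol z) ?_
    obtain ⟨w, hw1, hw2⟩ := exists_dual (m := m) hpq z
    have h1 := hvar (WithLp.toLp 2 w) hw1
    rw [inner_sub_right, real_inner_smul_left, real_inner_smul_left, sub_nonpos] at h1
    have h2 : ⟪z, WithLp.toLp 2 w⟫_ℝ ≤ ⟪z, Pi⟫_ℝ := le_of_mul_le_mul_left h1 hτ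
    calc lpNorm p z = ∑ i, w i * z i := hw2.symm
      _ = ⟪z, WithLp.toLp 2 w⟫_ℝ := by rw [real_inner_comm, inner_eq_sum]
      _ ≤ ⟪z, Pi⟫_ℝ := h2
      _ = ⟪Pi, z⟫_ℝ := real_inner_comm _ _
  have hkey : ∀ y, h z + 2⁻¹ * ‖y - z‖ ^ 2 ≤ h y := by
    intro y
    rw [hh y, hh z]
    have hexp : ‖y - uhat‖ ^ 2 = ‖z - uhat‖ ^ 2 + 2 * ⟪z - uhat, y - z⟫_ℝ + ‖y - z‖ ^ 2 := by
      have hab := norm_add_sq_real (z - uhat) (y - z)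
      rw [show z - uhat + (y - z) = y - uhat by abel] at hab
      linarith [hab]
    have hzin : ⟪z - uhat, y - z⟫_ℝ = -(τ⁻¹ * (⟪Pi, y⟫_ℝ - ⟪Pi, z⟫_ℝ)) := by
      have hzu : z - uhat = -(τ⁻¹ • Pi) := by rw [hz]; abel
      rw [hzu, inner_neg_left, real_inner_smul_left, inner_sub_right]
    have h4 : 0 ≤ τ⁻¹ * (lpNorm p y - ⟪Pi, y⟫_ℝ) :=
      mul_nonneg (inv_nonneg.mpr hτ.le) (sub_nonneg.mpr (hol y))
    have h5 : τ⁻¹ * lpNorm p z = τ⁻¹ * ⟪Pi, z⟫_ℝ := by rw [key2]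
    nlinarith [h4, h5, hexp, hzin]
  refine ⟨fun y => by linarith [hkey y, sq_nonneg ‖y - z‖], ?_⟩
  intro z' hz'
  have h1 := hkey z'
  have h2 := hz' z
  have h4 : z' - z = 0 := by
    rw [← norm_eq_zero]
    nlinarith [norm_nonneg (z' - z)]
  exact sub_eq_zero.mp h4
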